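/- arXiv:math/9812030 — 4 statements merged into one kernel-verified Lean document; each statement's English description precedes it below -/
import Mathlib

section
/- Let I, J ⊆ ℝ be intervals, let U : I × J → ℝ be twice continuously differentiable and satisfy U_{θv} = U_θ U_v on I × J, and let θ₋, θ₊ ∈ I and v₀, v ∈ J. Then the jump relation e^{-U(θ₊, v)} − e^{-U(θ₋, v)} = e^{-U(θ₊, v₀)} − e^{-U(θ₋, v₀)} holds; i.e., the jump in e^{-U} across the strip θ₋ ≤ θ ≤ θ₊ is independent of v. -/
open Real

/-- Partial derivative with respect to the first variable `θ`. -/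
noncomputable def pd1 (F : ℝ → ℝ → ℝ) : ℝ → ℝ → ℝ := fun θ v => deriv (fun t => F t v) θ

/-- Partial derivative with respect to the second variable `v`. -/
noncomputable def pd2 (F : ℝ → ℝ → ℝ) : ℝ → ℝ → ℝ := fun θ v => deriv (fun s => F θ s) v

open Set in
lemma eq_of_deriv_zero' (f : ℝ → ℝ) {a b : ℝ} (hab : a < b)
    (hc : ContinuousOn f (Set.Icc a b))
    (hd : ∀ x ∈ Set.Ioo a b, HasDerivAt f 0 x) : f b = f a := by
  obtain ⟨c, _, h0⟩ := exists_hasDerivAt_eq_slope f (fun _ => 0) hab hc hd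
  have hba : b - a ≠ 0 := sub_ne_zero.mpr hab.ne'
  have : f b - f a = 0 := by
    field_simp at h0
    linarith
  linarith

open Set in
lemma jump_core (I J : Set ℝ) (hI : I.OrdConnected) (hJ : J.OrdConnected)
    (U : ℝ → ℝ → ℝ)
    (hU : ContDiffOn ℝ 2 (fun p : ℝ × ℝ => U p.1 p.2) (I ×ˢ J))
    (heq : ∀ θ ∈ I, ∀ v ∈ J, pd2 (pd1 U) θ v = pd1 U θ v * pd2 U θ v)
    {θ1 θ2 a b : ℝ} (h12 : θ1 < θ2) (hθ1 : θ1 ∈ I) (hθ2 : θ2 ∈ I)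
    (hab : a < b) (ha : a ∈ J) (hb : b ∈ J) :
    Real.exp (-(U θ2 b)) - Real.exp (-(U θ1 b))
      = Real.exp (-(U θ2 a)) - Real.exp (-(U θ1 a)) := by
  set Uf : ℝ × ℝ → ℝ := fun p => U p.1 p.2 with hUf
  have hIcc1 : Icc θ1 θ2 ⊆ I := hI.out hθ1 hθ2
  have hIcc2 : Icc a b ⊆ J := hJ.out ha hb
  set R : Set (ℝ × ℝ) := Icc θ1 θ2 ×ˢ Icc a b with hRdef
  have hRsub : R ⊆ I ×ˢ J := Set.prod_mono hIcc1 hIcc2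
  have hU' : ContDiffOn ℝ 2 Uf R := hU.mono hRsub
  have hUniq : UniqueDiffOn ℝ R := (uniqueDiffOn_Icc h12).prod (uniqueDiffOn_Icc hab)
  set D : ℝ × ℝ → (ℝ × ℝ) →L[ℝ] ℝ := fun p => fderivWithin ℝ Uf R p with hDdef
  have hDcont : ContinuousOn D R := hU'.continuousOn_fderivWithin hUniq (by norm_num)
  -- the slice derivative in θ is given by the within-fderiv
  have hA : ∀ θ ∈ Ioo θ1 θ2, ∀ s ∈ Icc a b,
      HasDerivAt (fun t => U t s) (D (θ, s) (1, 0)) θ := by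
    intro θ hθ s hs
    have hmem : (θ, s) ∈ R := ⟨Ioo_subset_Icc_self hθ, hs⟩
    have hdiff : DifferentiableWithinAt ℝ Uf R (θ, s) :=
      (hU'.differentiableOn (by norm_num)) _ hmem
    have hfd : HasFDerivWithinAt Uf (D (θ, s)) R (θ, s) := hdiff.hasFDerivWithinAt
    have hι : HasDerivAt (fun t : ℝ => ((t, s) : ℝ × ℝ)) ((1 : ℝ), (0 : ℝ)) θ :=
      (hasDerivAt_id θ).prodMk (hasDerivAt_const θ s)
    have hmaps : Set.MapsTo (fun t : ℝ => ((t, s) : ℝ × ℝ)) (Icc θ1 θ2) R :=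
      fun t ht => ⟨ht, hs⟩
    have hcomp := hfd.comp_hasDerivWithinAt θ hι.hasDerivWithinAt hmaps
    exact hcomp.hasDerivAt (Icc_mem_nhds hθ.1 hθ.2)
  have hpd1 : ∀ θ ∈ Ioo θ1 θ2, ∀ s ∈ Icc a b, pd1 U θ s = D (θ, s) (1, 0) := by
    intro θ hθ s hs
    exact (hA θ hθ s hs).deriv
  -- v-step: for each θ in the open interval, pd1 U θ · * exp(-(U θ ·)) is constant
  have hk : ∀ θ ∈ Ioo θ1 θ2,
      pd1 U θ b * Real.exp (-(U θ b)) = pd1 U θ a * Real.exp (-(U θ a)) := by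
    intro θ hθ
    have hθI : θ ∈ Icc θ1 θ2 := Ioo_subset_Icc_self hθ
    apply eq_of_deriv_zero' (fun s => pd1 U θ s * Real.exp (-(U θ s))) hab
    · -- continuity
      have hsl : ContinuousOn (fun s : ℝ => ((θ, s) : ℝ × ℝ)) (Icc a b) :=
        (continuous_const.prodMk continuous_id).continuousOn
      have hmaps : ∀ s ∈ Icc a b, ((θ, s) : ℝ × ℝ) ∈ R := fun s hs => ⟨hθI, hs⟩
      have h1 : ContinuousOn (fun s => D (θ, s) ((1 : ℝ), (0 : ℝ))) (Icc a b) :=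
        (hDcont.comp hsl hmaps).clm_apply continuousOn_const
      have h2 : ContinuousOn (fun s => Real.exp (-(U θ s))) (Icc a b) := by
        have hu : ContinuousOn (fun s => U θ s) (Icc a b) :=
          hU'.continuousOn.comp hsl hmaps
        exact (hu.neg).rexp
      have h3 : ContinuousOn (fun s => D (θ, s) ((1 : ℝ), (0 : ℝ)) * Real.exp (-(U θ s)))
          (Icc a b) := h1.mul h2
      exact h3.congr fun s hs => by rw [hpd1 θ hθ s hs]
    · intro s hs
      have hsJ : s ∈ J := hIcc2 (Ioo_subset_Icc_self hs)
      have hθmemI : θ ∈ I := hIcc1 hθI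
      have hN : R ∈ nhds ((θ, s) : ℝ × ℝ) := by
        rw [hRdef]
        exact prod_mem_nhds (Icc_mem_nhds hθ.1 hθ.2) (Icc_mem_nhds hs.1 hs.2)
      have hD1 : ContDiffOn ℝ 1 D R := hU'.fderivWithin hUniq (by norm_num)
      have hDat : ContDiffAt ℝ 1 D (θ, s) := hD1.contDiffAt hN
      have hDdiff : DifferentiableAt ℝ (fun s' => D (θ, s') ((1 : ℝ), (0 : ℝ))) s := by
        have hpair : DifferentiableAt ℝ (fun s' : ℝ => ((θ, s') : ℝ × ℝ)) s :=
          (differentiableAt_const θ).prodMk differentiableAt_id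
        have h1 : DifferentiableAt ℝ (fun s' : ℝ => D (θ, s')) s :=
          (hDat.differentiableAt one_ne_zero).comp s hpair
        exact h1.clm_apply (differentiableAt_const _)
      have heqv : (fun s' => pd1 U θ s') =ᶠ[nhds s] fun s' => D (θ, s') ((1 : ℝ), (0 : ℝ)) := by
        filter_upwards [Ioo_mem_nhds hs.1 hs.2] with x hx
        exact hpd1 θ hθ x (Ioo_subset_Icc_self hx)
      have hdiff1 : DifferentiableAt ℝ (fun s' => pd1 U θ s') s :=
        hDdiff.congr_of_eventuallyEq heqv
      have hHD1 : HasDerivAt (fun s' => pd1 U θ s') (pd2 (pd1 U) θ s) s := by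
        have := hdiff1.hasDerivAt
        simpa [pd2] using this
      have hUat : ContDiffAt ℝ 2 Uf (θ, s) := hU'.contDiffAt hN
      have hUdiff : DifferentiableAt ℝ (fun s' => U θ s') s := by
        have hpair : DifferentiableAt ℝ (fun s' : ℝ => ((θ, s') : ℝ × ℝ)) s :=
          (differentiableAt_const θ).prodMk differentiableAt_id
        exact (hUat.differentiableAt (by norm_num)).comp s hpair
      have hHD2 : HasDerivAt (fun s' => U θ s') (pd2 U θ s) s := by
        have := hUdiff.hasDerivAt
        simpa [pd2] using this
      have hexp : HasDerivAt (fun s' => Real.exp (-(U θ s')))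
          (Real.exp (-(U θ s)) * (-(pd2 U θ s))) s :=
        (Real.hasDerivAt_exp _).comp s hHD2.neg
      have hprod := hHD1.mul hexp
      have hzero : pd2 (pd1 U) θ s * Real.exp (-(U θ s))
          + pd1 U θ s * (Real.exp (-(U θ s)) * (-(pd2 U θ s))) = 0 := by
        rw [heq θ hθmemI s hsJ]; ring
      rw [hzero] at hprod
      exact hprod
  -- θ-step
  have hmain : ∀ θ ∈ Ioo θ1 θ2,
      HasDerivAt (fun t => Real.exp (-(U t b)) - Real.exp (-(U t a))) 0 θ := by
    intro θ hθ
    have hAb := hA θ hθ b (right_mem_Icc.mpr hab.le)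
    have hAa := hA θ hθ a (left_mem_Icc.mpr hab.le)
    have hEb : HasDerivAt (fun t => Real.exp (-(U t b)))
        (Real.exp (-(U θ b)) * (-(D (θ, b) (1, 0)))) θ :=
      (Real.hasDerivAt_exp _).comp θ hAb.neg
    have hEa : HasDerivAt (fun t => Real.exp (-(U t a)))
        (Real.exp (-(U θ a)) * (-(D (θ, a) (1, 0)))) θ :=
      (Real.hasDerivAt_exp _).comp θ hAa.neg
    have hsub := hEb.sub hEa
    have e1 : D (θ, b) ((1 : ℝ), (0 : ℝ)) = pd1 U θ b :=
      (hpd1 θ hθ b (right_mem_Icc.mpr hab.le)).symm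
    have e2 : D (θ, a) ((1 : ℝ), (0 : ℝ)) = pd1 U θ a :=
      (hpd1 θ hθ a (left_mem_Icc.mpr hab.le)).symm
    have hval : Real.exp (-(U θ b)) * (-(D (θ, b) (1, 0)))
        - Real.exp (-(U θ a)) * (-(D (θ, a) (1, 0))) = 0 := by
      rw [e1, e2]
      have := hk θ hθ
      linarith
    rw [hval] at hsub
    exact hsub
  have hcont : ContinuousOn (fun t => Real.exp (-(U t b)) - Real.exp (-(U t a)))
      (Icc θ1 θ2) := by
    have hslb : ContinuousOn (fun t : ℝ => ((t, b) : ℝ × ℝ)) (Icc θ1 θ2) :=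
      (continuous_id.prodMk continuous_const).continuousOn
    have hsla : ContinuousOn (fun t : ℝ => ((t, a) : ℝ × ℝ)) (Icc θ1 θ2) :=
      (continuous_id.prodMk continuous_const).continuousOn
    have h1 : ContinuousOn (fun t => U t b) (Icc θ1 θ2) :=
      hU'.continuousOn.comp hslb fun t ht => ⟨ht, right_mem_Icc.mpr hab.le⟩
    have h2 : ContinuousOn (fun t => U t a) (Icc θ1 θ2) :=
      hU'.continuousOn.comp hsla fun t ht => ⟨ht, left_mem_Icc.mpr hab.le⟩
    exact (h1.neg.rexp).sub (h2.neg.rexp)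
  have := eq_of_deriv_zero' (fun t => Real.exp (-(U t b)) - Real.exp (-(U t a))) h12 hcont hmain
  linarith

/-- For a `C²` solution of `U_{θv} = U_θ U_v` on a rectangle `I × J`, the jump in
`e^{-U}` across the strip `θ₋ ≤ θ ≤ θ₊` is independent of `v`:
`e^{-U(θ₊,v)} − e^{-U(θ₋,v)} = e^{-U(θ₊,v₀)} − e^{-U(θ₋,v₀)}`. -/
theorem jump_in_exp_neg_U
    (I J : Set ℝ) (hI : I.OrdConnected) (hJ : J.OrdConnected)
    (U : ℝ → ℝ → ℝ)
    (hU : ContDiffOn ℝ 2 (fun p : ℝ × ℝ => U p.1 p.2) (I ×ˢ J))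
    (heq : ∀ θ ∈ I, ∀ v ∈ J, pd2 (pd1 U) θ v = pd1 U θ v * pd2 U θ v)
    (θm θp : ℝ) (hθm : θm ∈ I) (hθp : θp ∈ I)
    (v₀ v : ℝ) (hv₀ : v₀ ∈ J) (hv : v ∈ J) :
    Real.exp (-(U θp v)) - Real.exp (-(U θm v))
      = Real.exp (-(U θp v₀)) - Real.exp (-(U θm v₀)) := by
  by_cases hθ : θm = θp
  · subst hθ; simp
  by_cases hvv : v = v₀
  · subst hvv; rfl
  rcases Ne.lt_or_gt hθ with h1 | h1 <;> rcases Ne.lt_or_gt hvv with h2 | h2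
  · exact (jump_core I J hI hJ U hU heq h1 hθm hθp h2 hv hv₀).symm
  · exact jump_core I J hI hJ U hU heq h1 hθm hθp h2 hv₀ hv
  · have := jump_core I J hI hJ U hU heq h1 hθp hθm h2 hv hv₀
    linarith
  · have := jump_core I J hI hJ U hU heq h1 hθp hθm h2 hv₀ hv
    linarith
end

section
/- Let M, U, V : ℝ² → ℝ be smooth functions of (θ, v) satisfying the plane-polarized colliding plane wave evolution equations U_{θv} = U_θ U_v, V_{θv} = ½(U_θ V_v + U_v V_θ), and M_{θv} = ½(−U_θ U_v + V_θ V_v). Define the v-constraint function G = U_{vv} − ½(U_v² + V_v²) + U_v M_v. Then G satisfies the propagation equation G_θ = U_θ G. -/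
open Real

noncomputable def d1 (F : ℝ × ℝ → ℝ) : ℝ × ℝ → ℝ := fun p => fderiv ℝ F p (1, 0)
noncomputable def d2 (F : ℝ × ℝ → ℝ) : ℝ × ℝ → ℝ := fun p => fderiv ℝ F p (0, 1)

lemma smooth_d1 {F : ℝ × ℝ → ℝ} (hF : ContDiff ℝ (⊤ : ℕ∞) F) :
    ContDiff ℝ (⊤ : ℕ∞) (d1 F) :=
  (hF.fderiv_right (by simp)).clm_apply contDiff_const

lemma smooth_d2 {F : ℝ × ℝ → ℝ} (hF : ContDiff ℝ (⊤ : ℕ∞) F) :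
    ContDiff ℝ (⊤ : ℕ∞) (d2 F) :=
  (hF.fderiv_right (by simp)).clm_apply contDiff_const

lemma hasDerivAt_d1 {F : ℝ × ℝ → ℝ} (hF : ContDiff ℝ (⊤ : ℕ∞) F) (θ v : ℝ) :
    HasDerivAt (fun t => F (t, v)) (d1 F (θ, v)) θ := by
  have h1 : HasDerivAt (fun t : ℝ => (t, v)) ((1 : ℝ), (0 : ℝ)) θ :=
    HasDerivAt.prodMk (hasDerivAt_id θ) (hasDerivAt_const θ v)
  exact ((hF.differentiable (by simp) (θ, v)).hasFDerivAt).comp_hasDerivAt θ h1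

lemma hasDerivAt_d2 {F : ℝ × ℝ → ℝ} (hF : ContDiff ℝ (⊤ : ℕ∞) F) (θ v : ℝ) :
    HasDerivAt (fun s => F (θ, s)) (d2 F (θ, v)) v := by
  have h1 : HasDerivAt (fun s : ℝ => (θ, s)) ((0 : ℝ), (1 : ℝ)) v :=
    HasDerivAt.prodMk (hasDerivAt_const v θ) (hasDerivAt_id v)
  exact ((hF.differentiable (by simp) (θ, v)).hasFDerivAt).comp_hasDerivAt v h1

lemma pd1_eq {F : ℝ × ℝ → ℝ} (hF : ContDiff ℝ (⊤ : ℕ∞) F) (θ v : ℝ) :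
    pd1 (fun a b => F (a, b)) θ v = d1 F (θ, v) := (hasDerivAt_d1 hF θ v).deriv

lemma pd2_eq {F : ℝ × ℝ → ℝ} (hF : ContDiff ℝ (⊤ : ℕ∞) F) (θ v : ℝ) :
    pd2 (fun a b => F (a, b)) θ v = d2 F (θ, v) := (hasDerivAt_d2 hF θ v).deriv

lemma d1_d2_symm {F : ℝ × ℝ → ℝ} (hF : ContDiff ℝ (⊤ : ℕ∞) F) (p : ℝ × ℝ) :
    d1 (d2 F) p = d2 (d1 F) p := by
  have hsym : IsSymmSndFDerivAt ℝ F p :=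
    hF.contDiffAt.isSymmSndFDerivAt (by simp only [minSmoothness_of_isRCLikeNormedField]; exact WithTop.coe_le_coe.mpr (le_top : (2:ℕ∞) ≤ ⊤))
  have hdf : DifferentiableAt ℝ (fderiv ℝ F) p :=
    ((hF.fderiv_right (m := (⊤:ℕ∞)) (by simp)).differentiable (by simp)) p
  have key : ∀ w : ℝ × ℝ, ∀ z : ℝ × ℝ,
      fderiv ℝ (fun q => fderiv ℝ F q w) p z = fderiv ℝ (fderiv ℝ F) p z w := by
    intro w z
    have := fderiv_clm_apply (c := fderiv ℝ F) (u := fun _ => w) hdf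
      (differentiableAt_const w)
    rw [show (fun q => fderiv ℝ F q w) = (fun q => (fderiv ℝ F q) ((fun _ : ℝ × ℝ => w) q)) from rfl,
      this]
    simp
  have h : fderiv ℝ (fun q => fderiv ℝ F q (0,1)) p (1,0)
      = fderiv ℝ (fun q => fderiv ℝ F q (1,0)) p (0,1) := by
    rw [key, key]; exact hsym _ _
  exact h

lemma d2_mul {f g : ℝ × ℝ → ℝ} (hf : ContDiff ℝ (⊤ : ℕ∞) f) (hg : ContDiff ℝ (⊤ : ℕ∞) g)
    (p : ℝ × ℝ) :
    d2 (fun q => f q * g q) p = d2 f p * g p + f p * d2 g p := by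
  have h1 := (hasDerivAt_d2 hf p.1 p.2).mul (hasDerivAt_d2 hg p.1 p.2)
  have h2 := hasDerivAt_d2 (hf.mul hg) p.1 p.2
  have := h2.unique h1
  simpa using this


/-- For smooth solutions of the plane-polarized colliding plane wave evolution equations,
the `v`-constraint function `G = U_{vv} − ½(U_v² + V_v²) + U_v M_v` satisfies the
propagation equation `G_θ = U_θ G`. -/
theorem v_constraint_propagation
    (M U V : ℝ → ℝ → ℝ)
    (hM : ContDiff ℝ (⊤ : ℕ∞) (fun p : ℝ × ℝ => M p.1 p.2))
    (hU : ContDiff ℝ (⊤ : ℕ∞) (fun p : ℝ × ℝ => U p.1 p.2))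
    (hV : ContDiff ℝ (⊤ : ℕ∞) (fun p : ℝ × ℝ => V p.1 p.2))
    (e1 : ∀ θ v, pd2 (pd1 U) θ v = pd1 U θ v * pd2 U θ v)
    (e2 : ∀ θ v, pd2 (pd1 V) θ v
        = (1/2) * (pd1 U θ v * pd2 V θ v + pd2 U θ v * pd1 V θ v))
    (e3 : ∀ θ v, pd2 (pd1 M) θ v
        = (1/2) * (-(pd1 U θ v * pd2 U θ v) + pd1 V θ v * pd2 V θ v))
    (G : ℝ → ℝ → ℝ)
    (hG : ∀ θ v, G θ v = pd2 (pd2 U) θ v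
        - (1/2) * ((pd2 U θ v)^2 + (pd2 V θ v)^2) + pd2 U θ v * pd2 M θ v) :
    ∀ θ v, pd1 G θ v = pd1 U θ v * G θ v := by
  set Uh : ℝ × ℝ → ℝ := fun p => U p.1 p.2 with hUh
  set Vh : ℝ × ℝ → ℝ := fun p => V p.1 p.2 with hVh
  set Mh : ℝ × ℝ → ℝ := fun p => M p.1 p.2 with hMh
  -- translations of first partials
  have p1U : pd1 U = fun a b => d1 Uh (a, b) := funext fun a => funext fun b => pd1_eq hU a b
  have p2U : pd2 U = fun a b => d2 Uh (a, b) := funext fun a => funext fun b => pd2_eq hU a b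
  have p1V : pd1 V = fun a b => d1 Vh (a, b) := funext fun a => funext fun b => pd1_eq hV a b
  have p2V : pd2 V = fun a b => d2 Vh (a, b) := funext fun a => funext fun b => pd2_eq hV a b
  have p1M : pd1 M = fun a b => d1 Mh (a, b) := funext fun a => funext fun b => pd1_eq hM a b
  have p2M : pd2 M = fun a b => d2 Mh (a, b) := funext fun a => funext fun b => pd2_eq hM a b
  -- evolution equations at the level of d1/d2
  have e1' : ∀ p : ℝ × ℝ, d2 (d1 Uh) p = d1 Uh p * d2 Uh p := by
    intro p
    have h := e1 p.1 p.2
    rw [p1U, p2U] at h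
    rw [pd2_eq (smooth_d1 hU) p.1 p.2] at h
    simpa using h
  have e2' : ∀ p : ℝ × ℝ, d2 (d1 Vh) p
      = (1/2) * (d1 Uh p * d2 Vh p + d2 Uh p * d1 Vh p) := by
    intro p
    have h := e2 p.1 p.2
    rw [p1U, p2U, p1V, p2V] at h
    rw [pd2_eq (smooth_d1 hV) p.1 p.2] at h
    simpa using h
  have e3' : ∀ p : ℝ × ℝ, d2 (d1 Mh) p
      = (1/2) * (-(d1 Uh p * d2 Uh p) + d1 Vh p * d2 Vh p) := by
    intro p
    have h := e3 p.1 p.2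
    rw [p1M, p1U, p2U, p1V, p2V] at h
    rw [pd2_eq (smooth_d1 hM) p.1 p.2] at h
    simpa using h
  intro θ v
  -- abbreviations at the point (θ, v)
  set p : ℝ × ℝ := (θ, v) with hp
  -- rewrite G along the horizontal line through (θ, v)
  have hGfun : (fun t => G t v) = (fun t => d2 (d2 Uh) (t, v)
      - (1/2) * ((d2 Uh (t, v))^2 + (d2 Vh (t, v))^2) + d2 Uh (t, v) * d2 Mh (t, v)) := by
    funext t
    rw [hG t v, p2U, p2M, p2V, pd2_eq (smooth_d2 hU) t v]
  -- derivatives of the pieces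
  have hA : HasDerivAt (fun t => d2 Uh (t, v)) (d1 (d2 Uh) p) θ :=
    hasDerivAt_d1 (smooth_d2 hU) θ v
  have hB : HasDerivAt (fun t => d2 Vh (t, v)) (d1 (d2 Vh) p) θ :=
    hasDerivAt_d1 (smooth_d2 hV) θ v
  have hC : HasDerivAt (fun t => d2 Mh (t, v)) (d1 (d2 Mh) p) θ :=
    hasDerivAt_d1 (smooth_d2 hM) θ v
  have hD : HasDerivAt (fun t => d2 (d2 Uh) (t, v)) (d1 (d2 (d2 Uh)) p) θ :=
    hasDerivAt_d1 (smooth_d2 (smooth_d2 hU)) θ v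
  have h2 : HasDerivAt (fun t => (1/2) * ((d2 Uh (t, v))^2 + (d2 Vh (t, v))^2))
      ((1/2) * ((2 : ℕ) * (d2 Uh p)^1 * d1 (d2 Uh) p + (2 : ℕ) * (d2 Vh p)^1 * d1 (d2 Vh) p)) θ :=
    ((hA.pow 2).add (hB.pow 2)).const_mul (1/2)
  have h3 : HasDerivAt (fun t => d2 Uh (t, v) * d2 Mh (t, v))
      (d1 (d2 Uh) p * d2 Mh p + d2 Uh p * d1 (d2 Mh) p) θ := hA.mul hC
  have total := (hD.sub h2).add h3
  have hderiv : pd1 G θ v = d1 (d2 (d2 Uh)) p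
      - (1/2) * ((2 : ℕ) * (d2 Uh p)^1 * d1 (d2 Uh) p + (2 : ℕ) * (d2 Vh p)^1 * d1 (d2 Vh) p)
      + (d1 (d2 Uh) p * d2 Mh p + d2 Uh p * d1 (d2 Mh) p) := by
    show deriv (fun t => G t v) θ = _
    rw [hGfun]
    exact total.deriv
  -- the mixed-partial identities
  have sa : d1 (d2 Uh) p = d1 Uh p * d2 Uh p := (d1_d2_symm hU p).trans (e1' p)
  have sv : d1 (d2 Vh) p = (1/2) * (d1 Uh p * d2 Vh p + d2 Uh p * d1 Vh p) :=
    (d1_d2_symm hV p).trans (e2' p)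
  have sm : d1 (d2 Mh) p = (1/2) * (-(d1 Uh p * d2 Uh p) + d1 Vh p * d2 Vh p) :=
    (d1_d2_symm hM p).trans (e3' p)
  have hfun1 : d1 (d2 Uh) = fun q => d1 Uh q * d2 Uh q := by
    funext q; exact (d1_d2_symm hU q).trans (e1' q)
  have sb : d1 (d2 (d2 Uh)) p
      = (d1 Uh p * d2 Uh p) * d2 Uh p + d1 Uh p * d2 (d2 Uh) p := by
    rw [d1_d2_symm (smooth_d2 hU) p, hfun1,
      d2_mul (smooth_d1 hU) (smooth_d2 hU) p, e1' p]
  -- finish by algebra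
  rw [hderiv, sa, sv, sm, sb, hG θ v, p1U, p2U, p2V, p2M,
    pd2_eq (smooth_d2 hU) θ v]
  show _ = d1 Uh p * (d2 (d2 Uh) p - 1/2 * ((d2 Uh p)^2 + (d2 Vh p)^2) + d2 Uh p * d2 Mh p)
  push_cast
  ring
end

section
/- Let M, U, V, W : ℝ² → ℝ be smooth functions of (θ, v) satisfying the non-polarized colliding plane wave evolution equations: U_{θv} = U_θ U_v; V_{θv} = ½(U_θ V_v + U_v V_θ) − (V_θ W_v + V_v W_θ) tanh W; W_{θv} = ½(U_θ W_v + U_v W_θ) + V_θ V_v sinh W cosh W; M_{θv} = ½(−U_θ U_v + V_θ V_v cosh² W + W_θ W_v). Define the v-constraint function G = U_{vv} − ½(U_v² + V_v² cosh² W + W_v²) + U_v M_v. Then G satisfies the propagation equation G_θ = U_θ G. -/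
open Real

section helpers

variable {F : ℝ → ℝ → ℝ}

lemma pd1_fd (h : ContDiff ℝ (⊤ : ℕ∞) (fun p : ℝ × ℝ => F p.1 p.2)) (θ v : ℝ) :
    pd1 F θ v = fderiv ℝ (fun p : ℝ × ℝ => F p.1 p.2) (θ, v) ((1 : ℝ), (0 : ℝ)) := by
  have h1 : HasDerivAt (fun t => F t v)
      (fderiv ℝ (fun p : ℝ × ℝ => F p.1 p.2) (θ, v) ((1 : ℝ), (0 : ℝ))) θ := by
    have := ((h.differentiable (by simp) (θ, v)).hasFDerivAt).comp_hasDerivAt θ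
      ((hasDerivAt_id θ).prodMk (hasDerivAt_const θ v))
    simpa [Function.comp_def] using this
  exact h1.deriv

lemma pd2_fd (h : ContDiff ℝ (⊤ : ℕ∞) (fun p : ℝ × ℝ => F p.1 p.2)) (θ v : ℝ) :
    pd2 F θ v = fderiv ℝ (fun p : ℝ × ℝ => F p.1 p.2) (θ, v) ((0 : ℝ), (1 : ℝ)) := by
  have h1 : HasDerivAt (fun s => F θ s)
      (fderiv ℝ (fun p : ℝ × ℝ => F p.1 p.2) (θ, v) ((0 : ℝ), (1 : ℝ))) v := by
    have := ((h.differentiable (by simp) (θ, v)).hasFDerivAt).comp_hasDerivAt v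
      ((hasDerivAt_const v θ).prodMk (hasDerivAt_id v))
    simpa [Function.comp_def] using this
  exact h1.deriv

lemma hd1 (h : ContDiff ℝ (⊤ : ℕ∞) (fun p : ℝ × ℝ => F p.1 p.2)) (θ v : ℝ) :
    HasDerivAt (fun t => F t v) (pd1 F θ v) θ := by
  rw [pd1_fd h]
  have := ((h.differentiable (by simp) (θ, v)).hasFDerivAt).comp_hasDerivAt θ
    ((hasDerivAt_id θ).prodMk (hasDerivAt_const θ v))
  simpa [Function.comp_def] using this

lemma hd2 (h : ContDiff ℝ (⊤ : ℕ∞) (fun p : ℝ × ℝ => F p.1 p.2)) (θ v : ℝ) :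
    HasDerivAt (fun s => F θ s) (pd2 F θ v) v := by
  rw [pd2_fd h]
  have := ((h.differentiable (by simp) (θ, v)).hasFDerivAt).comp_hasDerivAt v
    ((hasDerivAt_const v θ).prodMk (hasDerivAt_id v))
  simpa [Function.comp_def] using this

lemma contDiff_pd1 (h : ContDiff ℝ (⊤ : ℕ∞) (fun p : ℝ × ℝ => F p.1 p.2)) :
    ContDiff ℝ (⊤ : ℕ∞) (fun p : ℝ × ℝ => pd1 F p.1 p.2) := by
  have h' : ContDiff ℝ (⊤ : ℕ∞) (fderiv ℝ (fun p : ℝ × ℝ => F p.1 p.2)) :=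
    (contDiff_infty_iff_fderiv.mp h).2
  have heq : (fun p : ℝ × ℝ => pd1 F p.1 p.2)
      = fun p : ℝ × ℝ => fderiv ℝ (fun q : ℝ × ℝ => F q.1 q.2) p ((1 : ℝ), (0 : ℝ)) := by
    funext p
    exact pd1_fd h p.1 p.2
  rw [heq]
  exact (ContinuousLinearMap.apply ℝ ℝ ((1 : ℝ), (0 : ℝ))).contDiff.comp h'

lemma contDiff_pd2 (h : ContDiff ℝ (⊤ : ℕ∞) (fun p : ℝ × ℝ => F p.1 p.2)) :
    ContDiff ℝ (⊤ : ℕ∞) (fun p : ℝ × ℝ => pd2 F p.1 p.2) := by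
  have h' : ContDiff ℝ (⊤ : ℕ∞) (fderiv ℝ (fun p : ℝ × ℝ => F p.1 p.2)) :=
    (contDiff_infty_iff_fderiv.mp h).2
  have heq : (fun p : ℝ × ℝ => pd2 F p.1 p.2)
      = fun p : ℝ × ℝ => fderiv ℝ (fun q : ℝ × ℝ => F q.1 q.2) p ((0 : ℝ), (1 : ℝ)) := by
    funext p
    exact pd2_fd h p.1 p.2
  rw [heq]
  exact (ContinuousLinearMap.apply ℝ ℝ ((0 : ℝ), (1 : ℝ))).contDiff.comp h'

lemma clairaut (h : ContDiff ℝ (⊤ : ℕ∞) (fun p : ℝ × ℝ => F p.1 p.2)) (θ v : ℝ) :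
    pd1 (pd2 F) θ v = pd2 (pd1 F) θ v := by
  set f := fun p : ℝ × ℝ => F p.1 p.2 with hf
  have h' : ContDiff ℝ (⊤ : ℕ∞) (fderiv ℝ f) := (contDiff_infty_iff_fderiv.mp h).2
  have hsymm : IsSymmSndFDerivAt ℝ f (θ, v) :=
    h.contDiffAt.isSymmSndFDerivAt (by
      rw [minSmoothness_of_isRCLikeNormedField]
      rw [show ((2:WithTop ℕ∞)) = ((2:ℕ∞):WithTop ℕ∞) from rfl]
      exact WithTop.coe_le_coe.2 le_top)
  have key : ∀ w u : ℝ × ℝ, fderiv ℝ (fun p => fderiv ℝ f p u) (θ, v) w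
      = fderiv ℝ (fderiv ℝ f) (θ, v) w u := by
    intro w u
    have : fderiv ℝ (fun p => fderiv ℝ f p u) (θ, v)
        = ((fderiv ℝ f (θ, v)).comp (fderiv ℝ (fun _ : ℝ × ℝ => u) (θ, v)))
          + (fderiv ℝ (fderiv ℝ f) (θ, v)).flip u :=
      fderiv_clm_apply (h'.differentiable (by simp) (θ, v)) (differentiableAt_const u)
    rw [this]
    simp
  have l1 : pd1 (pd2 F) θ v
      = fderiv ℝ (fderiv ℝ f) (θ, v) ((1 : ℝ), (0 : ℝ)) ((0 : ℝ), (1 : ℝ)) := by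
    rw [pd1_fd (contDiff_pd2 h) θ v]
    have heq : (fun p : ℝ × ℝ => pd2 F p.1 p.2) = fun p => fderiv ℝ f p ((0 : ℝ), (1 : ℝ)) := by
      funext p; exact pd2_fd h p.1 p.2
    rw [heq, key]
  have l2 : pd2 (pd1 F) θ v
      = fderiv ℝ (fderiv ℝ f) (θ, v) ((0 : ℝ), (1 : ℝ)) ((1 : ℝ), (0 : ℝ)) := by
    rw [pd2_fd (contDiff_pd1 h) θ v]
    have heq : (fun p : ℝ × ℝ => pd1 F p.1 p.2) = fun p => fderiv ℝ f p ((1 : ℝ), (0 : ℝ)) := by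
      funext p; exact pd1_fd h p.1 p.2
    rw [heq, key]
  rw [l1, l2, hsymm.eq]

end helpers

/-- For smooth solutions of the non-polarized colliding plane wave evolution equations,
the `v`-constraint function `G = U_{vv} − ½(U_v² + V_v² cosh² W + W_v²) + U_v M_v`
satisfies the propagation equation `G_θ = U_θ G`. -/
theorem nonpolarized_v_constraint_propagation
    (M U V W : ℝ → ℝ → ℝ)
    (hM : ContDiff ℝ (⊤ : ℕ∞) (fun p : ℝ × ℝ => M p.1 p.2))
    (hU : ContDiff ℝ (⊤ : ℕ∞) (fun p : ℝ × ℝ => U p.1 p.2))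
    (hV : ContDiff ℝ (⊤ : ℕ∞) (fun p : ℝ × ℝ => V p.1 p.2))
    (hW : ContDiff ℝ (⊤ : ℕ∞) (fun p : ℝ × ℝ => W p.1 p.2))
    (e1 : ∀ θ v, pd2 (pd1 U) θ v = pd1 U θ v * pd2 U θ v)
    (e2 : ∀ θ v, pd2 (pd1 V) θ v
        = (1/2) * (pd1 U θ v * pd2 V θ v + pd2 U θ v * pd1 V θ v)
          - (pd1 V θ v * pd2 W θ v + pd2 V θ v * pd1 W θ v) * Real.tanh (W θ v))
    (e3 : ∀ θ v, pd2 (pd1 W) θ v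
        = (1/2) * (pd1 U θ v * pd2 W θ v + pd2 U θ v * pd1 W θ v)
          + pd1 V θ v * pd2 V θ v * Real.sinh (W θ v) * Real.cosh (W θ v))
    (e4 : ∀ θ v, pd2 (pd1 M) θ v
        = (1/2) * (-(pd1 U θ v * pd2 U θ v)
            + pd1 V θ v * pd2 V θ v * (Real.cosh (W θ v))^2
            + pd1 W θ v * pd2 W θ v))
    (G : ℝ → ℝ → ℝ)
    (hG : ∀ θ v, G θ v = pd2 (pd2 U) θ v
        - (1/2) * ((pd2 U θ v)^2 + (pd2 V θ v)^2 * (Real.cosh (W θ v))^2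
            + (pd2 W θ v)^2)
        + pd2 U θ v * pd2 M θ v) :
    ∀ θ v, pd1 G θ v = pd1 U θ v * G θ v := by
  intro θ v
  have hUvv := hd1 (contDiff_pd2 (contDiff_pd2 hU)) θ v
  have hUv := hd1 (contDiff_pd2 hU) θ v
  have hVv := hd1 (contDiff_pd2 hV) θ v
  have hWv := hd1 (contDiff_pd2 hW) θ v
  have hMv := hd1 (contDiff_pd2 hM) θ v
  have hWθ := hd1 hW θ v
  have hcosh : HasDerivAt (fun t => Real.cosh (W t v))
      (Real.sinh (W θ v) * pd1 W θ v) θ := hWθ.cosh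
  have hGslice : (fun t => G t v) = fun t =>
      pd2 (pd2 U) t v
      - (1/2) * ((pd2 U t v)^2 + (pd2 V t v)^2 * (Real.cosh (W t v))^2 + (pd2 W t v)^2)
      + pd2 U t v * pd2 M t v := by
    funext t; exact hG t v
  have hE : HasDerivAt (fun t =>
      pd2 (pd2 U) t v
      - (1/2) * ((pd2 U t v)^2 + (pd2 V t v)^2 * (Real.cosh (W t v))^2 + (pd2 W t v)^2)
      + pd2 U t v * pd2 M t v)
      (pd1 (pd2 (pd2 U)) θ v
       - (1/2) * (((2:ℕ) * pd2 U θ v ^ 1 * pd1 (pd2 U) θ v)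
          + (((2:ℕ) * pd2 V θ v ^ 1 * pd1 (pd2 V) θ v) * (Real.cosh (W θ v))^2
             + (pd2 V θ v)^2 * ((2:ℕ) * (Real.cosh (W θ v))^1
                  * (Real.sinh (W θ v) * pd1 W θ v)))
          + ((2:ℕ) * pd2 W θ v ^ 1 * pd1 (pd2 W) θ v))
       + (pd1 (pd2 U) θ v * pd2 M θ v + pd2 U θ v * pd1 (pd2 M) θ v)) θ :=
    (hUvv.sub ((((hUv.pow 2).add (((hVv.pow 2).mul (hcosh.pow 2)))).add
      (hWv.pow 2)).const_mul (1/2))).add (hUv.mul hMv)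
  have hval : pd1 G θ v
      = pd1 (pd2 (pd2 U)) θ v
       - (1/2) * (((2:ℕ) * pd2 U θ v ^ 1 * pd1 (pd2 U) θ v)
          + (((2:ℕ) * pd2 V θ v ^ 1 * pd1 (pd2 V) θ v) * (Real.cosh (W θ v))^2
             + (pd2 V θ v)^2 * ((2:ℕ) * (Real.cosh (W θ v))^1
                  * (Real.sinh (W θ v) * pd1 W θ v)))
          + ((2:ℕ) * pd2 W θ v ^ 1 * pd1 (pd2 W) θ v))
       + (pd1 (pd2 U) θ v * pd2 M θ v + pd2 U θ v * pd1 (pd2 M) θ v) := by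
    show deriv (fun t => G t v) θ = _
    rw [hGslice]
    exact hE.deriv
  have hA : pd1 (pd2 (pd2 U)) θ v
      = (pd1 U θ v * pd2 U θ v) * pd2 U θ v + pd1 U θ v * pd2 (pd2 U) θ v := by
    rw [clairaut (contDiff_pd2 hU) θ v]
    have hswap : pd1 (pd2 U) = pd2 (pd1 U) := funext fun a => funext fun b => clairaut hU a b
    rw [hswap]
    have heq : pd2 (pd1 U) = fun a b => pd1 U a b * pd2 U a b :=
      funext fun a => funext fun b => e1 a b
    rw [heq]
    have := ((hd2 (contDiff_pd1 hU) θ v).mul (hd2 (contDiff_pd2 hU) θ v)).deriv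
    rw [e1 θ v] at this
    exact this
  rw [hval, hG θ v, hA, clairaut hU θ v, clairaut hV θ v, clairaut hW θ v,
    clairaut hM θ v, e1 θ v, e2 θ v, e3 θ v, e4 θ v,
    Real.tanh_eq_sinh_div_cosh]
  have hc : Real.cosh (W θ v) ≠ 0 := (Real.cosh_pos _).ne'
  field_simp
  ring
end

section
/- Let M, U, V, W : ℝ² → ℝ be smooth functions of (θ, v) satisfying the non-polarized colliding plane wave evolution equations: U_{θv} = U_θ U_v; V_{θv} = ½(U_θ V_v + U_v V_θ) − (V_θ W_v + V_v W_θ) tanh W; W_{θv} = ½(U_θ W_v + U_v W_θ) + V_θ V_v sinh W cosh W; M_{θv} = ½(−U_θ U_v + V_θ V_v cosh² W + W_θ W_v). Define the θ-constraint function H = U_{θθ} − ½(U_θ² + V_θ² cosh² W + W_θ²) + U_θ M_θ. Then H satisfies the propagation equation H_v = U_v H; in particular, if H vanishes on a line v = v₀, then H vanishes identically, so the θ-constraint is preserved by the evolution equations. -/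
open Real

lemma cpw_le : (1:WithTop ℕ∞) ≤ ((⊤:ℕ∞):WithTop ℕ∞) := by exact_mod_cast le_top
lemma cpw_le2 : ((⊤:ℕ∞):WithTop ℕ∞) + 1 ≤ ((⊤:ℕ∞):WithTop ℕ∞) := by exact_mod_cast le_top

section CPWHelpers

variable {F : ℝ → ℝ → ℝ}

private lemma cpw_hasDerivAt_fst (G : ℝ × ℝ → ℝ) (hG : Differentiable ℝ G) (θ v : ℝ) :
    HasDerivAt (fun t => G (t, v)) (fderiv ℝ G (θ, v) (1, 0)) θ :=
  (hG (θ, v)).hasFDerivAt.comp_hasDerivAt θ ((hasDerivAt_id θ).prodMk (hasDerivAt_const θ v))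

private lemma cpw_hasDerivAt_snd (G : ℝ × ℝ → ℝ) (hG : Differentiable ℝ G) (θ v : ℝ) :
    HasDerivAt (fun s => G (θ, s)) (fderiv ℝ G (θ, v) (0, 1)) v :=
  (hG (θ, v)).hasFDerivAt.comp_hasDerivAt v ((hasDerivAt_const v θ).prodMk (hasDerivAt_id v))

lemma cpw_pd1_eq (hF : ContDiff ℝ (⊤ : ℕ∞) (fun p : ℝ × ℝ => F p.1 p.2)) (θ v : ℝ) :
    pd1 F θ v = fderiv ℝ (fun p : ℝ × ℝ => F p.1 p.2) (θ, v) (1, 0) :=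
  (cpw_hasDerivAt_fst _ (hF.differentiable (by simp)) θ v).deriv

lemma cpw_pd2_eq (hF : ContDiff ℝ (⊤ : ℕ∞) (fun p : ℝ × ℝ => F p.1 p.2)) (θ v : ℝ) :
    pd2 F θ v = fderiv ℝ (fun p : ℝ × ℝ => F p.1 p.2) (θ, v) (0, 1) :=
  (cpw_hasDerivAt_snd _ (hF.differentiable (by simp)) θ v).deriv

lemma cpw_hasDerivAt_pd1 (hF : ContDiff ℝ (⊤ : ℕ∞) (fun p : ℝ × ℝ => F p.1 p.2)) (θ v : ℝ) :
    HasDerivAt (fun t => F t v) (pd1 F θ v) θ := by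
  rw [cpw_pd1_eq hF]
  exact cpw_hasDerivAt_fst _ (hF.differentiable (by simp)) θ v

lemma cpw_hasDerivAt_pd2 (hF : ContDiff ℝ (⊤ : ℕ∞) (fun p : ℝ × ℝ => F p.1 p.2)) (θ v : ℝ) :
    HasDerivAt (fun s => F θ s) (pd2 F θ v) v := by
  rw [cpw_pd2_eq hF]
  exact cpw_hasDerivAt_snd _ (hF.differentiable (by simp)) θ v

lemma cpw_contDiff_pd1 (hF : ContDiff ℝ (⊤ : ℕ∞) (fun p : ℝ × ℝ => F p.1 p.2)) :
    ContDiff ℝ (⊤ : ℕ∞) (fun p : ℝ × ℝ => pd1 F p.1 p.2) := by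
  have h : ContDiff ℝ (⊤ : ℕ∞)
      (fun p : ℝ × ℝ => fderiv ℝ (fun q : ℝ × ℝ => F q.1 q.2) p (1, 0)) :=
    (hF.fderiv_right cpw_le2).clm_apply contDiff_const
  have e : (fun p : ℝ × ℝ => pd1 F p.1 p.2)
      = fun p : ℝ × ℝ => fderiv ℝ (fun q : ℝ × ℝ => F q.1 q.2) p (1, 0) :=
    funext fun p => cpw_pd1_eq hF p.1 p.2
  rw [e]; exact h

lemma cpw_contDiff_pd2 (hF : ContDiff ℝ (⊤ : ℕ∞) (fun p : ℝ × ℝ => F p.1 p.2)) :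
    ContDiff ℝ (⊤ : ℕ∞) (fun p : ℝ × ℝ => pd2 F p.1 p.2) := by
  have h : ContDiff ℝ (⊤ : ℕ∞)
      (fun p : ℝ × ℝ => fderiv ℝ (fun q : ℝ × ℝ => F q.1 q.2) p (0, 1)) :=
    (hF.fderiv_right cpw_le2).clm_apply contDiff_const
  have e : (fun p : ℝ × ℝ => pd2 F p.1 p.2)
      = fun p : ℝ × ℝ => fderiv ℝ (fun q : ℝ × ℝ => F q.1 q.2) p (0, 1) :=
    funext fun p => cpw_pd2_eq hF p.1 p.2
  rw [e]; exact h

lemma cpw_pd_comm (hF : ContDiff ℝ (⊤ : ℕ∞) (fun p : ℝ × ℝ => F p.1 p.2)) (θ v : ℝ) :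
    pd1 (pd2 F) θ v = pd2 (pd1 F) θ v := by
  set G : ℝ × ℝ → ℝ := fun p => F p.1 p.2 with hG
  have hd : Differentiable ℝ G := hF.differentiable (by simp)
  have hG' : ContDiff ℝ (⊤ : ℕ∞) (fderiv ℝ G) := hF.fderiv_right cpw_le2
  have hf'' : HasFDerivAt (fderiv ℝ G) (fderiv ℝ (fderiv ℝ G) (θ, v)) (θ, v) :=
    (hG'.differentiable (by simp) _).hasFDerivAt
  have hsym := second_derivative_symmetric (f := G) (fun y => (hd y).hasFDerivAt) hf''
    ((1 : ℝ), (0 : ℝ)) ((0 : ℝ), (1 : ℝ))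
  have hev : ∀ w : ℝ × ℝ, HasFDerivAt (fun p => fderiv ℝ G p w)
      ((ContinuousLinearMap.apply ℝ ℝ w).comp (fderiv ℝ (fderiv ℝ G) (θ, v))) (θ, v) :=
    fun w => (ContinuousLinearMap.apply ℝ ℝ w).hasFDerivAt.comp _ hf''
  have h1 : pd1 (pd2 F) θ v = fderiv ℝ (fderiv ℝ G) (θ, v) (1, 0) (0, 1) := by
    have e : (fun t => pd2 F t v) = fun t => fderiv ℝ G (t, v) (0, 1) :=
      funext fun t => cpw_pd2_eq hF t v
    show deriv (fun t => pd2 F t v) θ = _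
    rw [e]
    exact ((hev (0, 1)).comp_hasDerivAt θ
      ((hasDerivAt_id θ).prodMk (hasDerivAt_const θ v))).deriv
  have h2 : pd2 (pd1 F) θ v = fderiv ℝ (fderiv ℝ G) (θ, v) (0, 1) (1, 0) := by
    have e : (fun s => pd1 F θ s) = fun s => fderiv ℝ G (θ, s) (1, 0) :=
      funext fun s => cpw_pd1_eq hF θ s
    show deriv (fun s => pd1 F θ s) v = _
    rw [e]
    exact ((hev (1, 0)).comp_hasDerivAt v
      ((hasDerivAt_const v θ).prodMk (hasDerivAt_id v))).deriv
  rw [h1, h2]; exact hsym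

end CPWHelpers

/-- For smooth solutions of the non-polarized colliding plane wave evolution equations,
the `θ`-constraint function `H = U_{θθ} − ½(U_θ² + V_θ² cosh² W + W_θ²) + U_θ M_θ`
satisfies `H_v = U_v H`; in particular, if `H` vanishes on a line `v = v₀` then `H ≡ 0`:
the `θ`-constraint is preserved by the evolution. -/
theorem nonpolarized_theta_constraint_preserved
    (M U V W : ℝ → ℝ → ℝ)
    (hM : ContDiff ℝ (⊤ : ℕ∞) (fun p : ℝ × ℝ => M p.1 p.2))
    (hU : ContDiff ℝ (⊤ : ℕ∞) (fun p : ℝ × ℝ => U p.1 p.2))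
    (hV : ContDiff ℝ (⊤ : ℕ∞) (fun p : ℝ × ℝ => V p.1 p.2))
    (hW : ContDiff ℝ (⊤ : ℕ∞) (fun p : ℝ × ℝ => W p.1 p.2))
    (e1 : ∀ θ v, pd2 (pd1 U) θ v = pd1 U θ v * pd2 U θ v)
    (e2 : ∀ θ v, pd2 (pd1 V) θ v
        = (1/2) * (pd1 U θ v * pd2 V θ v + pd2 U θ v * pd1 V θ v)
          - (pd1 V θ v * pd2 W θ v + pd2 V θ v * pd1 W θ v) * Real.tanh (W θ v))
    (e3 : ∀ θ v, pd2 (pd1 W) θ v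
        = (1/2) * (pd1 U θ v * pd2 W θ v + pd2 U θ v * pd1 W θ v)
          + pd1 V θ v * pd2 V θ v * Real.sinh (W θ v) * Real.cosh (W θ v))
    (e4 : ∀ θ v, pd2 (pd1 M) θ v
        = (1/2) * (-(pd1 U θ v * pd2 U θ v)
            + pd1 V θ v * pd2 V θ v * (Real.cosh (W θ v))^2
            + pd1 W θ v * pd2 W θ v))
    (H : ℝ → ℝ → ℝ)
    (hH : ∀ θ v, H θ v = pd1 (pd1 U) θ v
        - (1/2) * ((pd1 U θ v)^2 + (pd1 V θ v)^2 * (Real.cosh (W θ v))^2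
            + (pd1 W θ v)^2)
        + pd1 U θ v * pd1 M θ v) :
    (∀ θ v, pd2 H θ v = pd2 U θ v * H θ v)
    ∧ (∀ v₀, (∀ θ, H θ v₀ = 0) → ∀ θ v, H θ v = 0) := by
  have hU1 := cpw_contDiff_pd1 hU
  have hU2 := cpw_contDiff_pd2 hU
  have hU11 := cpw_contDiff_pd1 hU1
  have hV1 := cpw_contDiff_pd1 hV
  have hW1 := cpw_contDiff_pd1 hW
  have hM1 := cpw_contDiff_pd1 hM
  -- mixed partial of U in the other order
  have hmixU : ∀ θ v, pd1 (pd2 U) θ v = pd1 U θ v * pd2 U θ v :=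
    fun θ v => (cpw_pd_comm hU θ v).trans (e1 θ v)
  -- third derivative U_{θθv}
  have hU3 : ∀ θ v, pd2 (pd1 (pd1 U)) θ v
      = pd1 (pd1 U) θ v * pd2 U θ v + pd1 U θ v * (pd1 U θ v * pd2 U θ v) := by
    intro θ v
    rw [← cpw_pd_comm hU1]
    have e : (fun t => pd2 (pd1 U) t v) = fun t => pd1 U t v * pd2 U t v :=
      funext fun t => e1 t v
    show deriv (fun t => pd2 (pd1 U) t v) θ = _
    rw [e, ((cpw_hasDerivAt_pd1 hU1 θ v).fun_mul (cpw_hasDerivAt_pd1 hU2 θ v)).deriv,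
      hmixU]
  have key : ∀ θ v, HasDerivAt (fun s => H θ s) (pd2 U θ v * H θ v) v := by
    intro θ v
    have eH : (fun s => H θ s) = fun s =>
        pd1 (pd1 U) θ s
          - (1/2) * ((pd1 U θ s)^2 + (pd1 V θ s)^2 * (Real.cosh (W θ s))^2
              + (pd1 W θ s)^2)
          + pd1 U θ s * pd1 M θ s := funext fun s => hH θ s
    rw [eH]
    have dU1 := cpw_hasDerivAt_pd2 hU1 θ v
    have dU11 := cpw_hasDerivAt_pd2 hU11 θ v
    have dV1 := cpw_hasDerivAt_pd2 hV1 θ v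
    have dW1 := cpw_hasDerivAt_pd2 hW1 θ v
    have dM1 := cpw_hasDerivAt_pd2 hM1 θ v
    have dW := cpw_hasDerivAt_pd2 hW θ v
    have dB := ((dU1.fun_pow 2).fun_add ((dV1.fun_pow 2).fun_mul (dW.cosh.fun_pow 2))).fun_add (dW1.fun_pow 2)
    have hd := (dU11.fun_sub (HasDerivAt.const_mul (1/2 : ℝ) dB)).fun_add (dU1.fun_mul dM1)
    refine hd.congr_deriv ?_
    rw [hH, hU3, e1, e2, e3, e4, Real.tanh_eq_sinh_div_cosh]
    have hc : Real.cosh (W θ v) ≠ 0 := (Real.cosh_pos _).ne'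
    field_simp
    ring
  refine ⟨fun θ v => (key θ v).deriv, fun v₀ h0 θ v => ?_⟩
  have hd : ∀ s, HasDerivAt (fun s => H θ s * Real.exp (-U θ s)) 0 s := by
    intro s
    have hU' := cpw_hasDerivAt_pd2 hU θ s
    have h := (key θ s).fun_mul (hU'.fun_neg.exp)
    refine h.congr_deriv ?_
    ring
  have hc := is_const_of_deriv_eq_zero
    (fun s => (hd s).differentiableAt) (fun s => (hd s).deriv) v v₀
  rw [h0 θ, zero_mul] at hc
  exact (mul_eq_zero.mp hc).resolve_right (Real.exp_ne_zero _)
end
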